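/- Let R be a ring and I a right ideal such that the cyclic right R-module R/I has a finite filtration 0 = M₀ ⊆ M₁ ⊆ ... ⊆ Mₙ = R/I where each factor Mⱼ/Mⱼ₋₁ is isomorphic to R/Iⱼ for a finitely generated right ideal Iⱼ. Then I is finitely generated. -/

import Mathlib

lemma fp_of_equiv {R M N : Type*} [Ring R] [AddCommGroup M] [Module R M]
    [AddCommGroup N] [Module R N] [Module.FinitePresentation R M]
    (e : M ≃ₗ[R] N) : Module.FinitePresentation R N :=
  Module.finitePresentation_of_surjective e.toLinearMap e.surjective
    (by rw [LinearEquiv.ker]; exact Submodule.fg_bot)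

/-- If the cyclic right `R`-module `R/I` has a finite filtration
`⊥ = M₀ ⊆ M₁ ⊆ ⋯ ⊆ Mₙ = ⊤` in which each factor `Mⱼ₊₁/Mⱼ` is isomorphic to
`R/Iⱼ` for a finitely generated right ideal `Iⱼ`, then the right ideal `I`
is finitely generated.  Right ideals are submodules of `R` over `Rᵐᵒᵖ`. -/
theorem stmt9 (R : Type*) [Ring R] (I : Submodule Rᵐᵒᵖ R) (n : ℕ)
    (M : Fin (n + 1) → Submodule Rᵐᵒᵖ (R ⧸ I)) (hmono : Monotone M)
    (h0 : M 0 = ⊥) (htop : M (Fin.last n) = ⊤)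
    (hfac : ∀ j : Fin n, ∃ Ij : Submodule Rᵐᵒᵖ R, Ij.FG ∧
      Nonempty ((↥(M j.succ) ⧸
          Submodule.comap (M j.succ).subtype (M j.castSucc)) ≃ₗ[Rᵐᵒᵖ] (R ⧸ Ij))) :
    I.FG := by
  -- R is a finite Rᵐᵒᵖ-module
  have hRfin : Module.Finite Rᵐᵒᵖ R := by
    refine ⟨⟨{1}, ?_⟩⟩
    rw [eq_top_iff]
    intro x _
    have : x = (MulOpposite.op x) • (1 : R) := by simp
    rw [this]
    exact Submodule.smul_mem _ _ (Submodule.subset_span (by simp))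
  have eR : Rᵐᵒᵖ ≃ₗ[Rᵐᵒᵖ] R :=
    { toFun := MulOpposite.unop, invFun := MulOpposite.op,
      map_add' := fun _ _ => rfl, map_smul' := fun _ _ => rfl,
      left_inv := fun _ => rfl, right_inv := fun _ => rfl }
  have hRfp : Module.FinitePresentation Rᵐᵒᵖ R := fp_of_equiv eR
  -- each M j is finitely presented
  have key : ∀ j : Fin (n + 1), Module.FinitePresentation Rᵐᵒᵖ (M j) := by
    intro j
    induction j using Fin.induction with
    | zero =>
        rw [h0]
        have : Subsingleton (⊥ : Submodule Rᵐᵒᵖ (R ⧸ I)) := inferInstance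
        exact Module.finitePresentation_of_projective _ _
    | succ i ih =>
        obtain ⟨Ij, hIjfg, ⟨e⟩⟩ := hfac i
        have hIj : Module.FinitePresentation Rᵐᵒᵖ (R ⧸ Ij) :=
          Module.finitePresentation_of_surjective Ij.mkQ Ij.mkQ_surjective
            (by rw [Submodule.ker_mkQ]; exact hIjfg)
        have hquot : Module.FinitePresentation Rᵐᵒᵖ
            ((M i.succ) ⧸ Submodule.comap (M i.succ).subtype (M i.castSucc)) :=
          fp_of_equiv e.symm
        have hle : M i.castSucc ≤ M i.succ := hmono (Fin.castSucc_le_succ i)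
        have hker : Module.FinitePresentation Rᵐᵒᵖ
            (LinearMap.ker (Submodule.comap (M i.succ).subtype (M i.castSucc)).mkQ) := by
          have := ih
          rw [Submodule.ker_mkQ]
          exact fp_of_equiv (R := Rᵐᵒᵖ) (M := M i.castSucc)
            (N := Submodule.comap (M i.succ).subtype (M i.castSucc))
            (Submodule.comapSubtypeEquivOfLe hle).symm
        exact Module.finitePresentation_of_ker
          (Submodule.comap (M i.succ).subtype (M i.castSucc)).mkQ
          (Submodule.mkQ_surjective _)
  have hfp : Module.FinitePresentation Rᵐᵒᵖ (R ⧸ I) := by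
    have := key (Fin.last n)
    rw [htop] at this
    exact fp_of_equiv Submodule.topEquiv
  have := Module.FinitePresentation.fg_ker I.mkQ I.mkQ_surjective
  rwa [Submodule.ker_mkQ] at this
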